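/- Let {a_t}_{t≥1} be a nonnegative real sequence and K ≥ 0, and set η_t = t^{−2/3}. Assume a_{t+1} ≤ (1 − η_{t+1}) a_t + 2 η_{t+1}² K for all t ≥ 1. Then for every integer T ≥ 1, (1/T) ∑_{t=1}^T a_t ≤ (4 a_1 + 8 K (1 + ln T)) / T^{2/3}. -/

import Mathlib

private lemma cube23 {x : ℝ} (hx : 0 ≤ x) : (x ^ ((2:ℝ)/3)) ^ 3 = x ^ 2 := by
  rw [← Real.rpow_natCast (x ^ ((2:ℝ)/3)) 3, ← Real.rpow_mul hx, ← Real.rpow_natCast x 2]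
  norm_num

private lemma keyB (t : ℕ) (ht : 1 ≤ t) :
    (t:ℝ) ^ ((2:ℝ)/3) ≤ 2 * ((t:ℝ) ^ ((2:ℝ)/3) * ((t:ℝ)+1) ^ ((2:ℝ)/3)
      + ((t:ℝ)+1) ^ ((2:ℝ)/3) - (((t:ℝ)+1) ^ ((2:ℝ)/3)) ^ 2) := by
  have hx0 : (0:ℝ) ≤ (t:ℝ) := Nat.cast_nonneg t
  have hx1 : (1:ℝ) ≤ (t:ℝ) := by exact_mod_cast ht
  set x : ℝ := (t:ℝ) with hxdef
  set u := x ^ ((2:ℝ)/3) with hu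
  set v := (x+1) ^ ((2:ℝ)/3) with hv
  have hx10 : (0:ℝ) ≤ x + 1 := by linarith
  have hu0 : 0 ≤ u := Real.rpow_nonneg hx0 _
  have hv0 : 0 ≤ v := Real.rpow_nonneg hx10 _
  have huv : u ≤ v := Real.rpow_le_rpow hx0 (by linarith) (by norm_num)
  have hu1 : (1:ℝ) ≤ u := by
    calc (1:ℝ) = 1 ^ ((2:ℝ)/3) := (Real.one_rpow _).symm
    _ ≤ u := Real.rpow_le_rpow (by norm_num) hx1 (by norm_num)
  have hu3 : u ^ 3 = x ^ 2 := cube23 hx0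
  have hv3 : v ^ 3 = (x+1) ^ 2 := cube23 hx10
  rcases Nat.lt_or_ge t 3 with h3 | h3
  · interval_cases t
    · have h1 : x = 1 := by norm_num [hxdef]
      have hu' : u = 1 := by rw [hu, h1, Real.one_rpow]
      have hvlo : (1.587:ℝ) ≤ v := by
        apply le_of_pow_le_pow_left₀ three_ne_zero hv0
        rw [hv3, h1]; norm_num
      have hvhi : v ≤ 1.588 := by
        apply le_of_pow_le_pow_left₀ three_ne_zero (by norm_num)
        rw [hv3, h1]; norm_num
      rw [hu']; nlinarith
    · have h1 : x = 2 := by norm_num [hxdef]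
      have hulo : (1.587:ℝ) ≤ u := by
        apply le_of_pow_le_pow_left₀ three_ne_zero hu0
        rw [hu3, h1]; norm_num
      have huhi : u ≤ 1.588 := by
        apply le_of_pow_le_pow_left₀ three_ne_zero (by norm_num)
        rw [hu3, h1]; norm_num
      have hvlo : (2.08:ℝ) ≤ v := by
        apply le_of_pow_le_pow_left₀ three_ne_zero hv0
        rw [hv3, h1]; norm_num
      have hvhi : v ≤ 2.081 := by
        apply le_of_pow_le_pow_left₀ three_ne_zero (by norm_num)
        rw [hv3, h1]; norm_num
      nlinarith [mul_nonneg (by linarith : (0:ℝ) ≤ u - 1.587) (by linarith : (0:ℝ) ≤ v - 2.08)]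
  · have hx3 : (3:ℝ) ≤ x := by rw [hxdef]; exact_mod_cast h3
    have hxp : (0:ℝ) < x := by linarith
    have hvu : v ≤ u * (1 + 2/(3*x)) := by
      apply le_of_pow_le_pow_left₀ three_ne_zero (by positivity)
      rw [mul_pow, hu3, hv3]
      have h1 : (1 + 2/(3*x)) = (3*x+2)/(3*x) := by field_simp
      rw [h1, div_pow, ← mul_div_assoc, le_div_iff₀ (by positivity)]
      nlinarith
    have hu34 : u ≤ 3*x/4 := by
      apply le_of_pow_le_pow_left₀ three_ne_zero (by positivity)
      rw [hu3]; nlinarith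
    have hdelta : u * (2/(3*x)) ≤ 1/2 := by
      have h2 : u * (2/(3*x)) ≤ (3*x/4) * (2/(3*x)) := by
        apply mul_le_mul_of_nonneg_right hu34 (by positivity)
      have h3' : (3*x/4) * (2/(3*x)) = 1/2 := by field_simp; ring
      linarith
    have hvub : v ≤ u + 1/2 := by
      have : u * (1 + 2/(3*x)) = u + u * (2/(3*x)) := by ring
      linarith [hvu, this ▸ hvu]
    nlinarith [mul_nonneg (by linarith : (0:ℝ) ≤ v - u) (by linarith : (0:ℝ) ≤ u + 1 - v - 1/2),
      mul_le_mul_of_nonneg_left (by linarith : (1:ℝ)/2 ≤ u + 1 - v) hu0]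

private lemma cube13 {x : ℝ} (hx : 0 ≤ x) : (x ^ ((1:ℝ)/3)) ^ 3 = x := by
  rw [← Real.rpow_natCast (x ^ ((1:ℝ)/3)) 3, ← Real.rpow_mul hx]
  norm_num

private lemma sq13 {x : ℝ} (hx : 0 ≤ x) : (x ^ ((1:ℝ)/3)) ^ 2 = x ^ ((2:ℝ)/3) := by
  rw [← Real.rpow_natCast (x ^ ((1:ℝ)/3)) 2, ← Real.rpow_mul hx]
  norm_num

private lemma pointwiseA (a : ℕ → ℝ) (ha : ∀ t, 0 ≤ a t) (K : ℝ) (hK : 0 ≤ K)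
    (hrec : ∀ t : ℕ, 1 ≤ t →
      a (t + 1) ≤ (1 - ((t : ℝ) + 1) ^ (-(2 : ℝ)/3)) * a t
        + 2 * (((t : ℝ) + 1) ^ (-(2 : ℝ)/3)) ^ 2 * K) :
    ∀ t : ℕ, 1 ≤ t → a t ≤ (a 1 + 4*K) * ((t:ℝ) ^ ((2:ℝ)/3))⁻¹ := by
  intro t ht
  induction t, ht using Nat.le_induction with
  | base =>
    simp only [Nat.cast_one, Real.one_rpow, inv_one, mul_one]
    linarith [hK]
  | succ t ht IH =>
    have hx0 : (0:ℝ) ≤ (t:ℝ) := Nat.cast_nonneg t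
    have hx1 : (1:ℝ) ≤ (t:ℝ) := by exact_mod_cast ht
    set x : ℝ := (t:ℝ) with hxdef
    set u := x ^ ((2:ℝ)/3) with hu
    set v := (x+1) ^ ((2:ℝ)/3) with hv
    have hx10 : (0:ℝ) ≤ x + 1 := by linarith
    have hu1 : (1:ℝ) ≤ u := by
      calc (1:ℝ) = 1 ^ ((2:ℝ)/3) := (Real.one_rpow _).symm
      _ ≤ u := Real.rpow_le_rpow (by norm_num) hx1 (by norm_num)
    have huv : u ≤ v := Real.rpow_le_rpow hx0 (by linarith) (by norm_num)
    have hu0 : (0:ℝ) < u := by linarith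
    have hv0 : (0:ℝ) < v := by linarith
    have hB := keyB t ht
    rw [← hxdef, ← hu, ← hv] at hB
    set C := a 1 + 4*K with hC
    have hC0 : 0 ≤ C := by have := ha 1; rw [hC]; linarith
    have hC4 : 4*K ≤ C := by have := ha 1; rw [hC]; linarith
    have hneg : (x+1) ^ (-(2:ℝ)/3) = v⁻¹ := by
      rw [neg_div, Real.rpow_neg hx10, hv]
    have hrec' := hrec t ht
    rw [← hxdef, hneg] at hrec'
    have hcast : ((t+1:ℕ):ℝ) = x + 1 := by push_cast [hxdef]; ring
    rw [hcast, ← hv]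
    have hinv : v⁻¹ ≤ 1 := by
      rw [inv_le_one_iff₀]; right; linarith
    have h2 : (1 - v⁻¹) * a t ≤ (1 - v⁻¹) * (C * u⁻¹) := by
      apply mul_le_mul_of_nonneg_left IH (by linarith)
    have hnum : C*(v^2 - v) + 2*K*u ≤ C*(u*v) := by
      nlinarith [mul_nonneg hC0 (by linarith : (0:ℝ) ≤ 2*(u*v + v - v^2) - u),
        mul_nonneg (by linarith : (0:ℝ) ≤ C - 4*K) (by linarith : (0:ℝ) ≤ u)]
    have hfin : (1 - v⁻¹) * (C * u⁻¹) + 2 * (v⁻¹)^2 * K ≤ C * v⁻¹ := by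
      have e1 : (1 - v⁻¹) * (C * u⁻¹) + 2 * (v⁻¹)^2 * K = (C*(v^2 - v) + 2*K*u) / (u*v^2) := by
        field_simp
      have e2 : C * v⁻¹ = (C*(u*v)) / (u*v^2) := by
        field_simp
      rw [e1, e2]
      apply div_le_div_of_nonneg_right hnum (by positivity)
    linarith [hrec', h2, hfin]

private lemma sumC : ∀ T : ℕ, 1 ≤ T →
    ∑ t ∈ Finset.Icc 1 T, ((t:ℝ) ^ ((2:ℝ)/3))⁻¹ ≤ 3 * (T:ℝ) ^ ((1:ℝ)/3) := by
  intro T hT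
  induction T, hT using Nat.le_induction with
  | base => simp [Real.one_rpow]
  | succ T hT IH =>
    rw [Finset.sum_Icc_succ_top (by omega : 1 ≤ T + 1)]
    have hT0 : (0:ℝ) ≤ (T:ℝ) := Nat.cast_nonneg T
    have hT1 : (1:ℝ) ≤ (T:ℝ) := by exact_mod_cast hT
    have h10 : (0:ℝ) ≤ (T:ℝ) + 1 := by linarith
    set z := (T:ℝ) ^ ((1:ℝ)/3) with hz
    set w := ((T:ℝ)+1) ^ ((1:ℝ)/3) with hw
    have hz3 : z ^ 3 = (T:ℝ) := cube13 hT0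
    have hw3 : w ^ 3 = (T:ℝ) + 1 := cube13 h10
    have hz0 : 0 ≤ z := Real.rpow_nonneg hT0 _
    have hw0 : 0 ≤ w := Real.rpow_nonneg h10 _
    have hw1 : (1:ℝ) ≤ w := by
      calc (1:ℝ) = 1 ^ ((1:ℝ)/3) := (Real.one_rpow _).symm
      _ ≤ w := Real.rpow_le_rpow (by norm_num) (by linarith) (by norm_num)
    have hkey : w^2 * z ≤ (T:ℝ) + 2/3 := by
      apply le_of_pow_le_pow_left₀ three_ne_zero (by positivity)
      have : (w^2*z)^3 = (w^3)^2 * z^3 := by ring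
      rw [this, hz3, hw3]
      nlinarith
    have hcast : ((T+1:ℕ):ℝ) = (T:ℝ) + 1 := by push_cast; ring
    rw [hcast]
    have hsq : (((T:ℝ)+1) ^ ((2:ℝ)/3))⁻¹ = (w^2)⁻¹ := by rw [sq13 h10]
    rw [hsq]
    have hlast : (w^2)⁻¹ ≤ 3*(w - z) := by
      rw [inv_eq_one_div, div_le_iff₀ (by positivity)]
      nlinarith
    have : 3 * ((T:ℝ)+1) ^ ((1:ℝ)/3) = 3 * w := by rw [hw]
    rw [this]
    linarith

/-- **Averaged recursion bound for `η_t = t^{-2/3}`** (Lemma 6): if `a` is a nonnegative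
sequence with `a_{t+1} ≤ (1 - η_{t+1}) a_t + 2 η_{t+1}² K` for `η_t = t^{-2/3}` and
`K ≥ 0`, then `(1/T) ∑_{t=1}^T a_t ≤ (4 a_1 + 8 K (1 + ln T)) / T^{2/3}`. -/
theorem averaged_recursion_bound
    (a : ℕ → ℝ) (ha : ∀ t, 0 ≤ a t) (K : ℝ) (hK : 0 ≤ K)
    (hrec : ∀ t : ℕ, 1 ≤ t →
      a (t + 1) ≤ (1 - ((t : ℝ) + 1) ^ (-(2 : ℝ)/3)) * a t
        + 2 * (((t : ℝ) + 1) ^ (-(2 : ℝ)/3)) ^ 2 * K) :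
    ∀ T : ℕ, 1 ≤ T →
      (1 / (T : ℝ)) * ∑ t ∈ Finset.Icc 1 T, a t ≤
        (4 * a 1 + 8 * K * (1 + Real.log T)) / (T : ℝ) ^ ((2 : ℝ)/3) := by
  intro T hT
  rcases eq_or_lt_of_le hT with h1 | h2
  · -- T = 1
    rw [← h1]
    simp only [Finset.Icc_self, Finset.sum_singleton, Nat.cast_one, Real.one_rpow,
      Real.log_one]
    norm_num
    linarith [ha 1, hK]
  · -- 2 ≤ T
    have hT2 : 2 ≤ T := h2
    have hT0 : (0:ℝ) < (T:ℝ) := by positivity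
    have hT2' : (2:ℝ) ≤ (T:ℝ) := by exact_mod_cast hT2
    have hC0 : 0 ≤ a 1 + 4*K := by linarith [ha 1]
    set C := a 1 + 4*K with hC
    have hsum : ∑ t ∈ Finset.Icc 1 T, a t ≤ C * (3 * (T:ℝ) ^ ((1:ℝ)/3)) := by
      calc ∑ t ∈ Finset.Icc 1 T, a t
          ≤ ∑ t ∈ Finset.Icc 1 T, C * ((t:ℝ) ^ ((2:ℝ)/3))⁻¹ := by
            apply Finset.sum_le_sum
            intro t htm
            exact pointwiseA a ha K hK hrec t (Finset.mem_Icc.mp htm).1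
        _ = C * ∑ t ∈ Finset.Icc 1 T, ((t:ℝ) ^ ((2:ℝ)/3))⁻¹ := by
            rw [Finset.mul_sum]
        _ ≤ C * (3 * (T:ℝ) ^ ((1:ℝ)/3)) := by
            apply mul_le_mul_of_nonneg_left (sumC T hT) hC0
    have hmul : (T:ℝ)^((1:ℝ)/3) * (T:ℝ)^((2:ℝ)/3) = (T:ℝ) := by
      rw [← Real.rpow_add hT0]; norm_num
    have hid : (1/(T:ℝ)) * (C * (3 * (T:ℝ) ^ ((1:ℝ)/3))) = 3*C / (T:ℝ)^((2:ℝ)/3) := by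
      rw [eq_div_iff (by positivity : ((T:ℝ)^((2:ℝ)/3)) ≠ 0)]
      field_simp
      linear_combination C * hmul
    have hlog : (1/2:ℝ) ≤ Real.log T := by
      have h2' : Real.log 2 ≤ Real.log T := by
        apply Real.log_le_log (by norm_num) hT2'
      linarith [Real.log_two_gt_d9]
    have hnum : 3*C ≤ 4 * a 1 + 8 * K * (1 + Real.log T) := by
      have hKlog : K * (1/2) ≤ K * Real.log T := mul_le_mul_of_nonneg_left hlog hK
      have := ha 1
      rw [hC]; nlinarith
    calc (1/(T:ℝ)) * ∑ t ∈ Finset.Icc 1 T, a t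
        ≤ (1/(T:ℝ)) * (C * (3 * (T:ℝ) ^ ((1:ℝ)/3))) := by
          apply mul_le_mul_of_nonneg_left hsum (by positivity)
      _ = 3*C / (T:ℝ)^((2:ℝ)/3) := hid
      _ ≤ (4 * a 1 + 8 * K * (1 + Real.log T)) / (T : ℝ) ^ ((2 : ℝ)/3) := by
          apply div_le_div_of_nonneg_right hnum (by positivity)
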